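/- arXiv:2201.09714 — 9 statements merged into one kernel-verified Lean document; each statement's English description precedes it below -/
import Mathlib

section
/- Let V and K be closed subspaces of a Hilbert space H and let {e_i}_{i∈I} be an orthonormal basis of V. Then {P_K e_i : i ∈ I} is a Parseval frame for K if and only if K ⊆ V. -/
/-- Parseval identity for a Hilbert basis. -/
lemma parseval_norm_sq {E : Type*} [NormedAddCommGroup E] [InnerProductSpace ℂ E]
    {I : Type*} (B : HilbertBasis I ℂ E) (x : E) :
    ‖x‖ ^ 2 = ∑' i : I, ‖(inner ℂ x (B i) : ℂ)‖ ^ 2 := by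
  have h := B.tsum_inner_mul_inner x x
  have h2 : ∀ i : I, (inner ℂ x (B i) : ℂ) * inner ℂ (B i) x
      = ((‖(inner ℂ x (B i) : ℂ)‖ ^ 2 : ℝ) : ℂ) := by
    intro i
    rw [← inner_conj_symm (B i) x, Complex.mul_conj']
    push_cast
    ring
  rw [tsum_congr h2, ← Complex.ofReal_tsum] at h
  have h4 := congrArg Complex.re h
  rw [Complex.ofReal_re] at h4
  rw [h4]
  exact (inner_self_eq_norm_sq (𝕜 := ℂ) x).symm

/-- Let `V` and `K` be closed (complete) subspaces of a Hilbert space `H` and let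
`(b i)_{i ∈ I}` be an orthonormal basis of `V`. Then `{P_K (b i) : i ∈ I}` is a Parseval
frame for `K` if and only if `K ⊆ V`. -/
theorem stmt2 {H : Type*} [NormedAddCommGroup H] [InnerProductSpace ℂ H] [CompleteSpace H]
    (V K : Submodule ℂ H) [CompleteSpace V] [CompleteSpace K]
    {I : Type*} (b : I → H) (hb : Orthonormal ℂ b) (hbV : ∀ i, b i ∈ V)
    (hspan : V = (Submodule.span ℂ (Set.range b)).topologicalClosure) :
    (∀ k ∈ K, ‖k‖ ^ 2 = ∑' i : I, ‖(inner ℂ k ((K.orthogonalProjection (b i) : H)) : ℂ)‖ ^ 2)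
      ↔ K ≤ V := by
  classical
  -- the family restricted to V
  set b' : I → V := Set.codRestrict b V hbV with hb'def
  have hb' : Orthonormal ℂ b' := hb.codRestrict V hbV
  -- orthogonal complement of the span of b' in V is trivial
  have horth : (Submodule.span ℂ (Set.range b'))ᗮ = ⊥ := by
    rw [Submodule.eq_bot_iff]
    intro w hw
    have hwi : ∀ i, (inner ℂ (b i) (w : H) : ℂ) = 0 := by
      intro i
      have : (inner ℂ (b' i) w : ℂ) = 0 :=
        hw _ (Submodule.subset_span (Set.mem_range_self i))
      simpa [Submodule.coe_inner, hb'def] using this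
    -- (w : H) is orthogonal to span of b
    have hwspan : (w : H) ∈ (Submodule.span ℂ (Set.range b))ᗮ := by
      intro u hu
      induction hu using Submodule.span_induction with
      | mem u hu => obtain ⟨i, rfl⟩ := hu; exact hwi i
      | zero => simp
      | add u v _ _ hu hv => rw [inner_add_left, hu, hv, add_zero]
      | smul c u _ hu => rw [inner_smul_left, hu, mul_zero]
    -- (w : H) is in the closure of the span
    have hwV : (w : H) ∈ (Submodule.span ℂ (Set.range b)).topologicalClosure := by
      rw [← hspan]; exact w.2
    have hle : (Submodule.span ℂ (Set.range b)).topologicalClosure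
        ≤ (Submodule.span ℂ (Set.range b))ᗮᗮ :=
      (Submodule.span ℂ (Set.range b)).topologicalClosure_minimal
        (Submodule.le_orthogonal_orthogonal _) (Submodule.isClosed_orthogonal _)
    have : (inner ℂ ((w : H)) ((w : H)) : ℂ) = 0 := (hle hwV) _ hwspan
    have : (w : H) = 0 := by rwa [inner_self_eq_zero] at this
    exact Subtype.ext this
  let B : HilbertBasis I ℂ V := HilbertBasis.mkOfOrthogonalEqBot hb' horth
  have hB : ∀ i, (B i : H) = b i := by
    intro i
    rw [show B i = b' i from congrFun (HilbertBasis.coe_mkOfOrthogonalEqBot hb' horth) i]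
    rfl
  -- key computation: inner ℂ with projection equals inner ℂ with b i, for k ∈ K
  have key : ∀ k ∈ K, ∀ i, (inner ℂ k ((K.orthogonalProjection (b i) : H)) : ℂ) = inner ℂ k (b i) := by
    intro k hk i
    rw [← Submodule.starProjection_apply, ← Submodule.inner_starProjection_left_eq_right,
      Submodule.starProjection_eq_self_iff.mpr hk]
  -- Parseval in V: for any k, sum over ‖⟪k, b i⟫‖² equals ‖P_V k‖²
  have hV : ∀ k : H, (∑' i : I, ‖(inner ℂ k (b i) : ℂ)‖ ^ 2)
      = ‖(V.orthogonalProjection k : H)‖ ^ 2 := by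
    intro k
    have h1 : ∀ i : I, (inner ℂ k (b i) : ℂ)
        = inner ℂ (V.orthogonalProjection k) (B i) := by
      intro i
      rw [Submodule.coe_inner, hB, ← Submodule.starProjection_apply,
        Submodule.inner_starProjection_left_eq_right,
        Submodule.starProjection_eq_self_iff.mpr (hbV i)]
    rw [tsum_congr fun i => by rw [h1 i]]
    rw [← parseval_norm_sq B (V.orthogonalProjection k)]
    simp
  have main : ∀ k ∈ K,
      (∑' i : I, ‖(inner ℂ k ((K.orthogonalProjection (b i) : H)) : ℂ)‖ ^ 2)
        = ‖(V.orthogonalProjection k : H)‖ ^ 2 := by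
    intro k hk
    rw [tsum_congr fun i => by rw [key k hk i], hV k]
  constructor
  · intro hpar k hk
    have h1 : ‖k‖ ^ 2 = ‖(V.orthogonalProjection k : H)‖ ^ 2 := by
      rw [hpar k hk, main k hk]
    -- Pythagoras: ‖k‖² = ‖k - P k‖² + ‖P k‖²
    have horth2 : (inner ℂ ((V.orthogonalProjection k : H))
        (k - (V.orthogonalProjection k : H)) : ℂ) = 0 :=
      (Submodule.sub_starProjection_mem_orthogonal (K := V) k) _ (Submodule.coe_mem _)
    have hpyth : ‖k‖ ^ 2 = ‖(V.orthogonalProjection k : H)‖ ^ 2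
        + ‖k - (V.orthogonalProjection k : H)‖ ^ 2 := by
      have h3 := norm_add_sq (𝕜 := ℂ) ((V.orthogonalProjection k : H))
        (k - (V.orthogonalProjection k : H))
      rw [horth2] at h3
      simpa using h3
    have : ‖k - (V.orthogonalProjection k : H)‖ ^ 2 = 0 := by linarith [hpyth, h1]
    have hk0 : k - (V.orthogonalProjection k : H) = 0 := by
      rwa [pow_eq_zero_iff (by norm_num), norm_eq_zero] at this
    rw [sub_eq_zero.mp hk0]
    exact Submodule.coe_mem _
  · intro hKV k hk
    rw [main k hk, ← Submodule.starProjection_apply,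
      Submodule.starProjection_eq_self_iff.mpr (hKV hk)]
end

section
/- Let (S_i)_{i=0}^{N-1} satisfy the Cuntz relations on a Hilbert space H, and suppose v₀ is a unit vector with S_{i_{p-1}}*⋯S_{i_0}* v₀ = v₀. Then for every 0 ≤ k ≤ p-1 and every word ω of length k+1 with ω ≠ i₀…i_k, we have S_ω* v₀ = 0. -/
/-- Let `(Sᵢ)` satisfy the Cuntz relations and suppose `v₀` is a unit vector with
`S_{i_{p-1}}*⋯S_{i_0}* v₀ = v₀`. Then for every `0 ≤ k ≤ p-1` and every word `ω` of
length `k+1` with `ω ≠ i₀…i_k`, we have `S_ω* v₀ = 0`. -/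
theorem stmt5 {H : Type*} [NormedAddCommGroup H] [InnerProductSpace ℂ H] [CompleteSpace H]
    {N p : ℕ} (hp : 1 ≤ p) (S : Fin N → H →L[ℂ] H)
    (horth : ∀ i j, (ContinuousLinearMap.adjoint (S j)).comp (S i) =
      if i = j then 1 else 0)
    (hsum : ∑ i, (S i).comp (ContinuousLinearMap.adjoint (S i)) = 1)
    (v₀ : H) (hv : ‖v₀‖ = 1) (idx : Fin p → Fin N)
    (hper : (List.ofFn idx).foldl (fun v j => ContinuousLinearMap.adjoint (S j) v) v₀ = v₀) :
    ∀ k, k ≤ p - 1 → ∀ ω : List (Fin N), ω.length = k + 1 →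
      ω ≠ (List.ofFn idx).take (k + 1) →
      ω.foldl (fun v j => ContinuousLinearMap.adjoint (S j) v) v₀ = 0 := by
  set f : H → Fin N → H := fun v j => ContinuousLinearMap.adjoint (S j) v with hf
  -- sum of squares identity
  have sumSq : ∀ v : H, ∑ i, ‖ContinuousLinearMap.adjoint (S i) v‖ ^ 2 = ‖v‖ ^ 2 := by
    intro v
    have key : ∑ i, ((‖ContinuousLinearMap.adjoint (S i) v‖ : ℂ)) ^ 2 = ((‖v‖ : ℂ)) ^ 2 := by
      have h1 : ∀ i : Fin N, ((‖ContinuousLinearMap.adjoint (S i) v‖ : ℂ)) ^ 2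
          = inner ℂ v ((S i) (ContinuousLinearMap.adjoint (S i) v)) := by
        intro i
        rw [← ContinuousLinearMap.adjoint_inner_left (S i)
          (ContinuousLinearMap.adjoint (S i) v) v]
        exact (inner_self_eq_norm_sq_to_K (𝕜 := ℂ) (E := H) (x := (ContinuousLinearMap.adjoint (S i)) v)).symm
      calc ∑ i, ((‖ContinuousLinearMap.adjoint (S i) v‖ : ℂ)) ^ 2
          = ∑ i, inner ℂ v ((S i) (ContinuousLinearMap.adjoint (S i) v)) := by
            exact Finset.sum_congr rfl fun i _ => h1 i
        _ = inner ℂ v ((∑ i, (S i).comp (ContinuousLinearMap.adjoint (S i))) v) := by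
            rw [ContinuousLinearMap.sum_apply, inner_sum]; rfl
        _ = inner ℂ v v := by rw [hsum]; rfl
        _ = ((‖v‖ : ℂ)) ^ 2 := inner_self_eq_norm_sq_to_K v
    have := key
    push_cast at this
    exact_mod_cast this
  -- norm non-increasing
  have normle : ∀ (v : H) (j : Fin N), ‖f v j‖ ≤ ‖v‖ := by
    intro v j
    have h1 : ‖f v j‖ ^ 2 ≤ ‖v‖ ^ 2 := by
      rw [← sumSq v]
      exact Finset.single_le_sum (f := fun i => ‖ContinuousLinearMap.adjoint (S i) v‖ ^ 2)
        (fun i _ => sq_nonneg _) (Finset.mem_univ j)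
    exact (abs_le_of_sq_le_sq' h1 (norm_nonneg v)).2
  -- the chain of vectors
  set w : ℕ → H := fun k => ((List.ofFn idx).take k).foldl f v₀ with hw
  have hlen : (List.ofFn idx).length = p := List.length_ofFn
  have hgetTake : ∀ k (hk : k < p), (List.ofFn idx).take (k + 1)
      = (List.ofFn idx).take k ++ [idx ⟨k, hk⟩] := by
    intro k hk
    rw [List.take_succ]
    congr 1
    have hx : (List.ofFn idx)[k]? = some (idx ⟨k, hk⟩) := by
      rw [List.getElem?_eq_getElem (by rw [hlen]; exact hk)]
      simp
    rw [hx]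
    rfl
  have hstep : ∀ k (hk : k < p), w (k + 1) = f (w k) (idx ⟨k, hk⟩) := by
    intro k hk
    simp only [hw, hgetTake k hk, List.foldl_append, List.foldl_cons, List.foldl_nil]
  have hwp : w p = v₀ := by
    simp only [hw]
    rw [List.take_of_length_le (le_of_eq hlen)]
    exact hper
  have hmono : ∀ m k, k ≤ m → m ≤ p → ‖w m‖ ≤ ‖w k‖ := by
    intro m
    induction m with
    | zero => intro k hk _; interval_cases k; exact le_refl _
    | succ n ih =>
      intro k hk hm
      rcases Nat.eq_or_lt_of_le hk with h | h
      · exact h ▸ le_refl _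
      · have hn : n < p := lt_of_lt_of_le (Nat.lt_succ_self n) hm
        calc ‖w (n + 1)‖ = ‖f (w n) (idx ⟨n, hn⟩)‖ := by rw [hstep n hn]
          _ ≤ ‖w n‖ := normle _ _
          _ ≤ ‖w k‖ := ih k (Nat.lt_succ_iff.mp h) (le_of_lt hn)
  have hnorm : ∀ k, k ≤ p → ‖w k‖ = 1 := by
    intro k hk
    have h1 : ‖w k‖ ≤ 1 := by
      have := hmono k 0 (Nat.zero_le k) hk
      simpa [hw, hv] using this
    have h2 : (1 : ℝ) ≤ ‖w k‖ := by
      have := hmono p k hk (le_refl p)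
      rwa [hwp, hv] at this
    linarith
  -- vanishing lemma
  have hvanish : ∀ k (hk : k < p) (j : Fin N), j ≠ idx ⟨k, hk⟩ → f (w k) j = 0 := by
    intro k hk j hj
    have hsq : ∑ i, ‖ContinuousLinearMap.adjoint (S i) (w k)‖ ^ 2 = 1 := by
      rw [sumSq, hnorm k (le_of_lt hk)]; norm_num
    have hik : ‖ContinuousLinearMap.adjoint (S (idx ⟨k, hk⟩)) (w k)‖ ^ 2 = 1 := by
      have : ‖w (k + 1)‖ = 1 := hnorm (k + 1) hk
      rw [hstep k hk] at this
      simp only [hf] at this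
      rw [this]; norm_num
    have hsplit := Finset.add_sum_erase Finset.univ
      (fun i => ‖ContinuousLinearMap.adjoint (S i) (w k)‖ ^ 2) (Finset.mem_univ (idx ⟨k, hk⟩))
    rw [hsq, hik] at hsplit
    have hz : ∑ i ∈ Finset.univ.erase (idx ⟨k, hk⟩),
        ‖ContinuousLinearMap.adjoint (S i) (w k)‖ ^ 2 = 0 := by linarith
    have hj0 : ‖ContinuousLinearMap.adjoint (S j) (w k)‖ ^ 2 = 0 := by
      have := (Finset.sum_eq_zero_iff_of_nonneg (fun i _ => sq_nonneg _)).mp hz j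
        (Finset.mem_erase.mpr ⟨hj, Finset.mem_univ j⟩)
      exact this
    have : ‖ContinuousLinearMap.adjoint (S j) (w k)‖ = 0 := by
      nlinarith [norm_nonneg (ContinuousLinearMap.adjoint (S j) (w k))]
    simpa [hf] using norm_eq_zero.mp this
  -- main lemma by reverse induction on the word
  have main : ∀ ω : List (Fin N), ω.length ≤ p →
      ω ≠ (List.ofFn idx).take ω.length → ω.foldl f v₀ = 0 := by
    intro ω
    induction ω using List.reverseRecOn with
    | nil => intro _ hne; simp at hne
    | append_singleton l j ih =>
      intro hlen' hne
      rw [List.foldl_append, List.foldl_cons, List.foldl_nil]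
      have hl : l.length < p := by
        have : l.length + 1 ≤ p := by simpa using hlen'
        omega
      by_cases hcase : l = (List.ofFn idx).take l.length
      · -- the prefix matches; last letter must differ
        have hfoldl : l.foldl f v₀ = w l.length := by
          simp only [hw]
          rw [← hcase]
        have hjne : j ≠ idx ⟨l.length, hl⟩ := by
          intro hjeq
          apply hne
          rw [List.length_append, List.length_singleton, hgetTake l.length hl,
            ← hcase, hjeq]
        rw [hfoldl]
        exact hvanish l.length hl j hjne
      · have : l.foldl f v₀ = 0 := ih (le_of_lt hl) hcase
        rw [this]
        simp [hf]
  intro k hk ω hlenω hne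
  have hlp : ω.length ≤ p := by omega
  have : ω ≠ (List.ofFn idx).take ω.length := by rw [hlenω]; exact hne
  exact main ω hlp this
end

section
/- Let (K, (V_i)_{i=0}^{N-1}) be a row co-isometry acting on a finite-dimensional subspace K₀ with orthonormal basis (e_c)_{c∈M} as a random walk (M, {g_i}, {ν_i}): V_i* e_c = ν_i(c) e_{g_i(c)}. If the random walk is irreducible and separating, then any operator T : K₀ → K₀ satisfying P_{K₀}(Σ_{i=0}^{N-1} V_i T V_i*) P_{K₀} = T is a scalar multiple of the identity on K₀. -/
/-- The endpoint `g_ω(c)` of the path starting at `c` along the word `ω`. -/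
def walkG {ι α : Type*} (g : ι → α → α) : List ι → α → α
  | [], c => c
  | i :: ω, c => walkG g ω (g i c)

/-- The product `ν_ω(c)` of the transition weights along the path starting at `c`
following the word `ω`. -/
def walkNu {ι α : Type*} (g : ι → α → α) (ν : ι → α → ℂ) : List ι → α → ℂ
  | [], _ => 1
  | i :: ω, c => ν i c * walkNu g ν ω (g i c)

/-- Let `(K, (Vᵢ))` be a row co-isometry acting on a subspace `K₀` with orthonormal basis
`(e c)_{c ∈ M}` (`M` finite) as a random walk: `Vᵢ* (e c) = νᵢ(c) • e (gᵢ c)`. If the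
random walk is irreducible and separating, then any operator `T` on `K₀` satisfying
`P_{K₀} (∑ᵢ Vᵢ T Vᵢ*) P_{K₀} = T` is a scalar multiple of the identity on `K₀`. -/
theorem stmt8 {K : Type*} [NormedAddCommGroup K] [InnerProductSpace ℂ K] [CompleteSpace K]
    {N : ℕ} (V : Fin N → K →L[ℂ] K)
    (hco : ∑ i, (V i).comp (ContinuousLinearMap.adjoint (V i)) = 1)
    {M : Type*} [Fintype M] (e : M → K) (hon : Orthonormal ℂ e)
    (K₀ : Submodule ℂ K) (hK₀ : K₀ = Submodule.span ℂ (Set.range e))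
    (g : Fin N → M → M) (ν : Fin N → M → ℂ)
    (hwalk : ∀ i c, ContinuousLinearMap.adjoint (V i) (e c) = ν i c • e (g i c))
    (hirr : ∀ c₁ c₂ : M, ∃ ω : List (Fin N), walkG g ω c₁ = c₂ ∧ walkNu g ν ω c₁ ≠ 0)
    (hsep : ∀ c₁ c₂ : M, c₁ ≠ c₂ → ∃ n : ℕ, ∀ ω : List (Fin N), n ≤ ω.length →
      walkNu g ν ω c₁ = 0 ∨ walkNu g ν ω c₂ = 0)
    (P : K →L[ℂ] K) (hP1 : ∀ v, P v ∈ K₀) (hP2 : ∀ v, v - P v ∈ K₀ᗮ)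
    (T : K →L[ℂ] K) (hTr : ∀ v, T v ∈ K₀)
    (hTeq : P.comp ((∑ i, (V i).comp (T.comp (ContinuousLinearMap.adjoint (V i)))).comp P)
      = T) :
    ∃ lam : ℂ, ∀ v ∈ K₀, T v = lam • v := by
  classical
  rcases isEmpty_or_nonempty M with hM | hM
  · refine ⟨0, fun v hv => ?_⟩
    rw [hK₀, Set.range_eq_empty, Submodule.span_empty, Submodule.mem_bot] at hv
    simp [hv]
  have heK : ∀ c, e c ∈ K₀ := fun c => hK₀ ▸ Submodule.subset_span ⟨c, rfl⟩
  have hone : ∀ c d : M, (inner ℂ (e c) (e d) : ℂ) = if c = d then 1 else 0 :=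
    orthonormal_iff_ite.mp hon
  have hPe : ∀ c, P (e c) = e c := by
    intro c
    have h1 : e c - P (e c) ∈ K₀ := Submodule.sub_mem _ (heK c) (hP1 _)
    have h0 : e c - P (e c) = 0 := by
      have := (Submodule.orthogonal_disjoint K₀).le_bot
        (Submodule.mem_inf.2 ⟨h1, hP2 (e c)⟩)
      simpa using this
    exact (sub_eq_zero.mp h0).symm
  have hPinner : ∀ (x : K) (c : M), (inner ℂ (e c) (P x) : ℂ) = inner ℂ (e c) x := by
    intro x c
    have h := (Submodule.mem_orthogonal K₀ _).1 (hP2 x) (e c) (heK c)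
    rw [inner_sub_right] at h
    exact (sub_eq_zero.mp h).symm
  have hsum : ∀ c, ∑ i, (starRingEnd ℂ) (ν i c) * ν i c = 1 := by
    intro c
    have h : (∑ i, (V i).comp (ContinuousLinearMap.adjoint (V i))) (e c) = e c := by
      rw [hco]; rfl
    have h2 : (inner ℂ (e c)
        ((∑ i, (V i).comp (ContinuousLinearMap.adjoint (V i))) (e c)) : ℂ) = 1 := by
      rw [h, hone]; simp
    rw [ContinuousLinearMap.sum_apply, inner_sum] at h2
    calc ∑ i, (starRingEnd ℂ) (ν i c) * ν i c
        = ∑ i, (inner ℂ (e c)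
            (((V i).comp (ContinuousLinearMap.adjoint (V i))) (e c)) : ℂ) := by
          refine Finset.sum_congr rfl fun i _ => ?_
          rw [ContinuousLinearMap.comp_apply, ← ContinuousLinearMap.adjoint_inner_left,
            hwalk, inner_smul_left, inner_smul_right, hone]
          simp
      _ = 1 := h2
  set t : M → M → ℂ := fun c d => inner ℂ (e c) (T (e d)) with ht
  have hrec : ∀ c d, t c d
      = ∑ i, (starRingEnd ℂ) (ν i c) * (ν i d * t (g i c) (g i d)) := by
    intro c d
    have h := congrArg (fun A : K →L[ℂ] K => A (e d)) hTeq
    simp only [ContinuousLinearMap.comp_apply] at h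
    rw [hPe] at h
    have h2 : t c d = inner ℂ (e c)
        ((∑ i, (V i).comp (T.comp (ContinuousLinearMap.adjoint (V i)))) (e d)) := by
      rw [ht]; dsimp only; rw [← h, hPinner]
    rw [h2, ContinuousLinearMap.sum_apply, inner_sum]
    refine Finset.sum_congr rfl fun i _ => ?_
    rw [ContinuousLinearMap.comp_apply, ContinuousLinearMap.comp_apply,
      ← ContinuousLinearMap.adjoint_inner_left, hwalk, hwalk, inner_smul_left,
      map_smul, inner_smul_right]
  have hzero : ∀ n : ℕ, ∀ c d : M,
      (∀ ω : List (Fin N), ω.length = n → walkNu g ν ω c = 0 ∨ walkNu g ν ω d = 0) →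
      t c d = 0 := by
    intro n
    induction n with
    | zero =>
      intro c d h
      rcases h [] rfl with h1 | h1 <;> simp [walkNu] at h1
    | succ n ih =>
      intro c d h
      rw [hrec c d]
      refine Finset.sum_eq_zero fun i _ => ?_
      by_cases hc : ν i c = 0
      · simp [hc]
      by_cases hd : ν i d = 0
      · simp [hd]
      have h0 : t (g i c) (g i d) = 0 := by
        refine ih _ _ fun ω hω => ?_
        rcases h (i :: ω) (by simp [hω]) with h1 | h1
        · left; rw [walkNu] at h1; exact (mul_eq_zero.mp h1).resolve_left hc
        · right; rw [walkNu] at h1; exact (mul_eq_zero.mp h1).resolve_left hd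
      simp [h0]
  have hoff : ∀ c d : M, c ≠ d → t c d = 0 := by
    intro c d hcd
    obtain ⟨n, hn⟩ := hsep c d hcd
    exact hzero n c d fun ω hω => hn ω (le_of_eq hω.symm)
  have hsumR : ∀ c, ∑ i, Complex.normSq (ν i c) = 1 := by
    intro c
    have h := congrArg Complex.re (hsum c)
    rw [Complex.re_sum] at h
    simpa only [← Complex.normSq_eq_conj_mul_self, Complex.ofReal_re, Complex.one_re] using h
  have hconst : ∀ ψ : M → ℝ,
      (∀ c, ψ c = ∑ i, Complex.normSq (ν i c) * ψ (g i c)) → ∀ c d, ψ c = ψ d := by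
    intro ψ hψ
    obtain ⟨c₀, -, hmax⟩ := Finset.exists_max_image Finset.univ ψ
      ⟨Classical.arbitrary M, Finset.mem_univ _⟩
    have key : ∀ c, ψ c = ψ c₀ → ∀ i, ν i c ≠ 0 → ψ (g i c) = ψ c₀ := by
      intro c hc i hi
      have hle : ∀ j ∈ Finset.univ,
          Complex.normSq (ν j c) * ψ (g j c) ≤ Complex.normSq (ν j c) * ψ c₀ :=
        fun j _ => mul_le_mul_of_nonneg_left (hmax _ (Finset.mem_univ _))
          (Complex.normSq_nonneg _)
      have hsums : ∑ j, Complex.normSq (ν j c) * ψ (g j c)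
          = ∑ j, Complex.normSq (ν j c) * ψ c₀ := by
        rw [← hψ c, hc, ← Finset.sum_mul, hsumR, one_mul]
      have heq := (Finset.sum_eq_sum_iff_of_le hle).mp hsums i (Finset.mem_univ i)
      have hn : Complex.normSq (ν i c) ≠ 0 := fun h => hi (Complex.normSq_eq_zero.mp h)
      exact mul_left_cancel₀ hn heq
    have keyw : ∀ ω : List (Fin N), ∀ c, ψ c = ψ c₀ → walkNu g ν ω c ≠ 0 →
        ψ (walkG g ω c) = ψ c₀ := by
      intro ω
      induction ω with
      | nil => intro c hc _; exact hc
      | cons i ω ih =>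
        intro c hc hn
        rw [walkNu] at hn
        rw [walkG]
        exact ih (g i c) (key c hc i fun h => hn (by simp [h]))
          fun h => hn (by simp [h])
    have hall : ∀ c, ψ c = ψ c₀ := by
      intro c
      obtain ⟨ω, hg, hn⟩ := hirr c₀ c
      rw [← hg]
      exact keyw ω c₀ rfl hn
    intro c d; rw [hall c, hall d]
  have hdiagC : ∀ c, t c c = ∑ i, ((Complex.normSq (ν i c) : ℂ)) * t (g i c) (g i c) := by
    intro c
    rw [hrec c c]
    refine Finset.sum_congr rfl fun i _ => ?_
    rw [Complex.normSq_eq_conj_mul_self, mul_assoc]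
  have hre : ∀ c d : M, (t c c).re = (t d d).re := by
    refine hconst (fun c => (t c c).re) fun c => ?_
    rw [hdiagC c, Complex.re_sum]
    refine Finset.sum_congr rfl fun i _ => ?_
    simp [Complex.mul_re]
  have him : ∀ c d : M, (t c c).im = (t d d).im := by
    refine hconst (fun c => (t c c).im) fun c => ?_
    rw [hdiagC c, Complex.im_sum]
    refine Finset.sum_congr rfl fun i _ => ?_
    simp [Complex.mul_im]
  have hdiag : ∀ c d : M, t c c = t d d := fun c d => Complex.ext (hre c d) (him c d)
  set c₀ := Classical.arbitrary M with hc₀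
  set lam := t c₀ c₀ with hlam
  have hTe : ∀ d, T (e d) = lam • e d := by
    intro d
    have hx : T (e d) - lam • e d ∈ K₀ :=
      Submodule.sub_mem _ (hTr _) (Submodule.smul_mem _ _ (heK d))
    have hinner : ∀ c, (inner ℂ (e c) (T (e d) - lam • e d) : ℂ) = 0 := by
      intro c
      rw [inner_sub_right, inner_smul_right, hone]
      by_cases hcd : c = d
      · subst hcd
        have h1 : (inner ℂ (e c) (T (e c)) : ℂ) = lam := hdiag c c₀
        rw [h1]; simp
      · have h1 : (inner ℂ (e c) (T (e d)) : ℂ) = 0 := hoff c d hcd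
        rw [h1]; simp [hcd]
    have horth : T (e d) - lam • e d ∈ K₀ᗮ := by
      rw [Submodule.mem_orthogonal]
      intro u hu
      rw [hK₀] at hu
      induction hu using Submodule.span_induction with
      | mem x hx =>
        obtain ⟨c, rfl⟩ := hx
        exact hinner c
      | zero => simp
      | add x y hx hy ihx ihy => rw [inner_add_left, ihx, ihy, add_zero]
      | smul a x hx ih => rw [inner_smul_left, ih, mul_zero]
    have h0 : T (e d) - lam • e d = 0 := by
      have := (Submodule.orthogonal_disjoint K₀).le_bot (Submodule.mem_inf.2 ⟨hx, horth⟩)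
      simpa using this
    exact sub_eq_zero.mp h0
  refine ⟨lam, fun v hv => ?_⟩
  rw [hK₀] at hv
  induction hv using Submodule.span_induction with
  | mem x hx =>
    obtain ⟨c, rfl⟩ := hx
    exact hTe c
  | zero => simp
  | add x y hx hy ihx ihy => rw [map_add, ihx, ihy, smul_add]
  | smul a x hx ih => rw [map_smul, ih, smul_comm]
end

section
/- Let g₀,…,g_{N-1} be contractions on a complete metric space T, and let ν_i : T → ℂ be continuous weight functions with Σ_{i=0}^{N-1} |ν_i(t)|² = 1 for all t. Then there exists δ > 0 such that any two distinct minimal compact invariant sets M₁, M₂ satisfy dist(M₁, M₂) ≥ δ. In particular, there are only finitely many minimal compact invariant sets. -/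
/-- A set `M` is invariant for the random walk: possible transitions from points of `M`
stay in `M`. -/
def InvariantSet {ι T : Type*} (g : ι → T → T) (ν : ι → T → ℂ) (M : Set T) : Prop :=
  ∀ t ∈ M, ∀ i, ν i t ≠ 0 → g i t ∈ M

/-- A minimal compact invariant set: nonempty, compact, invariant, and containing no
proper nonempty compact invariant subset. -/
def MinimalCompactInvariant {ι T : Type*} [TopologicalSpace T]
    (g : ι → T → T) (ν : ι → T → ℂ) (M : Set T) : Prop :=
  M.Nonempty ∧ IsCompact M ∧ InvariantSet g ν M ∧
    ∀ M' ⊆ M, M'.Nonempty → IsCompact M' → InvariantSet g ν M' → M' = M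

open Set TopologicalSpace ENNReal

/-- For contractions `gᵢ` on a complete metric space with continuous weights `νᵢ`
satisfying `∑ᵢ |νᵢ(t)|² = 1`, there is a `δ > 0` such that distinct minimal compact
invariant sets are at distance at least `δ`; in particular there are only finitely many
minimal compact invariant sets. -/
theorem stmt10 {T : Type*} [MetricSpace T] [CompleteSpace T] {N : ℕ}
    (g : Fin N → T → T) (c : NNReal) (hc : c < 1) (hg : ∀ i, LipschitzWith c (g i))
    (ν : Fin N → T → ℂ) (hν : ∀ i, Continuous (ν i))
    (hsum : ∀ t, ∑ i, ‖ν i t‖ ^ 2 = 1) :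
    (∃ δ > (0 : ℝ), ∀ M₁ M₂ : Set T, MinimalCompactInvariant g ν M₁ →
        MinimalCompactInvariant g ν M₂ → M₁ ≠ M₂ →
        ∀ x ∈ M₁, ∀ y ∈ M₂, δ ≤ dist x y) ∧
      {M : Set T | MinimalCompactInvariant g ν M}.Finite := by
  rcases isEmpty_or_nonempty T with hT | hT
  · constructor
    · exact ⟨1, one_pos, fun M₁ M₂ _ _ _ x _ => isEmptyElim x⟩
    · have : {M : Set T | MinimalCompactInvariant g ν M} = ∅ := by
        ext M
        simp only [mem_setOf_eq, mem_empty_iff_false, iff_false]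
        rintro ⟨⟨x, _⟩, _⟩
        exact isEmptyElim x
      rw [this]; exact Set.finite_empty
  obtain ⟨t₀⟩ := hT
  have hN : 0 < N := by
    by_contra h
    push_neg at h
    interval_cases N
    have := hsum t₀
    simp at this
  have hex : ∀ t : T, ∃ i, ν i t ≠ 0 := by
    intro t
    by_contra h
    push_neg at h
    have h1 := hsum t
    have : ∀ i : Fin N, ‖ν i t‖ ^ 2 = 0 := fun i => by simp [h i]
    rw [Finset.sum_congr rfl (fun i _ => this i)] at h1
    simp at h1
  -- The Hutchinson operator
  have hFc : ∀ K : NonemptyCompacts T, IsCompact (⋃ i, g i '' (K : Set T)) :=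
    fun K => isCompact_iUnion fun i => K.isCompact.image (hg i).continuous
  have hFne : ∀ K : NonemptyCompacts T, (⋃ i, g i '' (K : Set T)).Nonempty := by
    intro K
    obtain ⟨x, hx⟩ := K.nonempty
    exact ⟨g ⟨0, hN⟩ x, Set.mem_iUnion.2 ⟨⟨0, hN⟩, Set.mem_image_of_mem _ hx⟩⟩
  set F : NonemptyCompacts T → NonemptyCompacts T :=
    fun K => ⟨⟨⋃ i, g i '' (K : Set T), hFc K⟩, hFne K⟩ with hFdef
  have hside : ∀ A B : NonemptyCompacts T, ∀ x ∈ ⋃ i, g i '' (A : Set T),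
      ∃ y ∈ ⋃ i, g i '' (B : Set T),
        edist x y ≤ c * EMetric.hausdorffEdist (A : Set T) (B : Set T) := by
    intro A B x hx
    obtain ⟨i, k, hk, rfl⟩ : ∃ i, ∃ k ∈ (A : Set T), g i k = x := by
      simpa using hx
    obtain ⟨k', hk', hkk'⟩ := B.isCompact.exists_infEdist_eq_edist B.nonempty k
    refine ⟨g i k', Set.mem_iUnion.2 ⟨i, Set.mem_image_of_mem _ hk'⟩, ?_⟩
    calc edist (g i k) (g i k') ≤ c * edist k k' := hg i k k'
      _ = c * EMetric.infEdist k (B : Set T) := by rw [← hkk']; rfl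
      _ ≤ c * EMetric.hausdorffEdist (A : Set T) (B : Set T) :=
          mul_le_mul_right (EMetric.infEdist_le_hausdorffEdist_of_mem hk) _
  have hFlip : LipschitzWith c F := by
    intro K K'
    have h1 := hside K K'
    have h2 := hside K' K
    have hcomm : EMetric.hausdorffEdist (K' : Set T) (K : Set T)
        = EMetric.hausdorffEdist (K : Set T) (K' : Set T) := EMetric.hausdorffEdist_comm
    rw [hcomm] at h2
    exact EMetric.hausdorffEdist_le_of_mem_edist h1 h2
  have hCF : ContractingWith c F := ⟨by exact_mod_cast hc, hFlip⟩
  haveI : Nonempty (NonemptyCompacts T) :=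
    ⟨⟨⟨{t₀}, isCompact_singleton⟩, Set.singleton_nonempty _⟩⟩
  set X : NonemptyCompacts T := ContractingWith.fixedPoint F hCF with hXdef
  set X₀ : Set T := (X : Set T) with hX₀def
  have hfix : F X = X := hCF.fixedPoint_isFixedPt
  have hX₀eq : (⋃ i, g i '' X₀) = X₀ := congrArg (fun K : NonemptyCompacts T => (K : Set T)) hfix
  have hX₀c : IsCompact X₀ := X.isCompact
  have hX₀ne : X₀.Nonempty := X.nonempty
  have hmaps : ∀ i (x : T), x ∈ X₀ → g i x ∈ X₀ := by
    intro i x hx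
    have : g i x ∈ ⋃ j, g j '' X₀ := Set.mem_iUnion.2 ⟨i, Set.mem_image_of_mem _ hx⟩
    rwa [hX₀eq] at this
  have hstep : ∀ i (t : T), EMetric.infEdist (g i t) X₀ ≤ c * EMetric.infEdist t X₀ := by
    intro i t
    obtain ⟨y, hy, hyd⟩ := hX₀c.exists_infEdist_eq_edist hX₀ne t
    calc EMetric.infEdist (g i t) X₀ ≤ edist (g i t) (g i y) :=
          EMetric.infEdist_le_edist_of_mem (hmaps i y hy)
      _ ≤ c * edist t y := hg i t y
      _ = c * EMetric.infEdist t X₀ := by rw [← hyd]; rfl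
  -- every minimal compact invariant set is contained in X₀
  have hsub : ∀ M, MinimalCompactInvariant g ν M → M ⊆ X₀ := by
    rintro M ⟨hMne, hMc, hMinv, hMmin⟩
    obtain ⟨p, hp, hpmin⟩ := hMc.exists_isMinOn hMne
      (EMetric.continuous_infEdist (s := X₀)).continuousOn
    have hp0 : EMetric.infEdist p X₀ = 0 := by
      by_contra hne0
      obtain ⟨i, hi⟩ := hex p
      have h1 : EMetric.infEdist p X₀ ≤ EMetric.infEdist (g i p) X₀ :=
        isMinOn_iff.1 hpmin _ (hMinv p hp i hi)
      have h2 := hstep i p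
      have hfin : EMetric.infEdist p X₀ ≠ ⊤ := by
        obtain ⟨y, hy⟩ := hX₀ne
        exact ne_top_of_le_ne_top (edist_ne_top p y) (EMetric.infEdist_le_edist_of_mem hy)
      have hlt : (c : ℝ≥0∞) * EMetric.infEdist p X₀ < 1 * EMetric.infEdist p X₀ := by
        rw [ENNReal.mul_lt_mul_iff_left hne0 hfin]
        exact_mod_cast hc
      rw [one_mul] at hlt
      exact absurd (h1.trans h2) (not_le.2 hlt)
    have hpX : p ∈ X₀ := by
      rw [← hX₀c.isClosed.closure_eq]
      exact EMetric.mem_closure_iff_infEdist_zero.2 hp0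
    have heq : M ∩ X₀ = M :=
      hMmin (M ∩ X₀) Set.inter_subset_left ⟨p, hp, hpX⟩
        (hMc.inter_right hX₀c.isClosed)
        (fun t ht i hi => ⟨hMinv t ht.1 i hi, hmaps i t ht.2⟩)
    rw [← heq]; exact Set.inter_subset_right
  -- uniform continuity of the weights on X₀
  set w : T → (Fin N → ℝ) := fun t i => ‖ν i t‖ ^ 2 with hwdef
  have hwc : Continuous w := continuous_pi fun i => (hν i).norm.pow 2
  have hwu : UniformContinuousOn w X₀ := hX₀c.uniformContinuousOn_of_continuous hwc.continuousOn
  have hNR : (1:ℝ) ≤ (N:ℝ) := by exact_mod_cast hN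
  have hNpos : (0:ℝ) < 1 / (2 * N) := by positivity
  obtain ⟨η, hη, hηs⟩ := (Metric.uniformContinuousOn_iff).1 hwu (1/(2*N)) hNpos
  have hkey : ∀ x ∈ X₀, ∀ y ∈ X₀, dist x y < η → ∃ i, ν i x ≠ 0 ∧ ν i y ≠ 0 := by
    intro x hx y hy hxy
    obtain ⟨i, hi⟩ : ∃ i, 1 / (N:ℝ) ≤ ‖ν i x‖ ^ 2 := by
      by_contra h
      push_neg at h
      have hlt : ∑ i : Fin N, ‖ν i x‖ ^ 2 < ∑ _i : Fin N, 1/(N:ℝ) :=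
        Finset.sum_lt_sum_of_nonempty (Finset.univ_nonempty_iff.2 ⟨⟨0, hN⟩⟩)
          (fun i _ => h i)
      rw [hsum x, Finset.sum_const, Finset.card_univ, Fintype.card_fin, nsmul_eq_mul] at hlt
      rw [mul_one_div, div_self (by positivity : (N:ℝ) ≠ 0)] at hlt
      exact absurd hlt (lt_irrefl 1)
    have hd := hηs x hx y hy hxy
    have hcoord : dist (w x i) (w y i) < 1/(2*N) := lt_of_le_of_lt (dist_le_pi_dist _ _ i) hd
    rw [Real.dist_eq] at hcoord
    have hwx : w x i = ‖ν i x‖ ^ 2 := rfl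
    have hwy : w y i = ‖ν i y‖ ^ 2 := rfl
    have h2N : 1/(2*(N:ℝ)) < 1/(N:ℝ) := by
      apply div_lt_div_of_pos_left one_pos (by positivity)
      nlinarith
    refine ⟨i, ?_, ?_⟩
    · intro h0
      rw [h0] at hi
      simp only [norm_zero] at hi
      nlinarith
    · intro h0
      have : w y i = 0 := by rw [hwy, h0]; simp
      rw [this, hwx, sub_zero] at hcoord
      have : ‖ν i x‖ ^ 2 < 1/(2*N) := lt_of_abs_lt hcoord
      nlinarith
  -- separation
  have hsep : ∀ M₁ M₂ : Set T, MinimalCompactInvariant g ν M₁ →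
      MinimalCompactInvariant g ν M₂ → M₁ ≠ M₂ →
      ∀ x ∈ M₁, ∀ y ∈ M₂, η ≤ dist x y := by
    intro M₁ M₂ h₁ h₂ hne
    obtain ⟨h₁ne, h₁c, h₁inv, h₁min⟩ := id h₁
    obtain ⟨h₂ne, h₂c, h₂inv, h₂min⟩ := id h₂
    have hdis : ∀ z, z ∈ M₁ → z ∉ M₂ := by
      intro z hz1 hz2
      apply hne
      have hinv' : InvariantSet g ν (M₁ ∩ M₂) :=
        fun t ht i hi => ⟨h₁inv t ht.1 i hi, h₂inv t ht.2 i hi⟩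
      have e1 : M₁ ∩ M₂ = M₁ := h₁min _ Set.inter_subset_left ⟨z, hz1, hz2⟩
        (h₁c.inter_right h₂c.isClosed) hinv'
      have e2 : M₁ ∩ M₂ = M₂ := h₂min _ Set.inter_subset_right ⟨z, hz1, hz2⟩
        (h₁c.inter_right h₂c.isClosed) hinv'
      rw [← e1, e2]
    obtain ⟨⟨p, q⟩, hpq, hmin⟩ := (h₁c.prod h₂c).exists_isMinOn (h₁ne.prod h₂ne)
      (continuous_dist.continuousOn)
    by_contra hcon
    push_neg at hcon
    obtain ⟨x, hx, y, hy, hxy⟩ := hcon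
    have hpqlt : dist p q < η :=
      lt_of_le_of_lt (isMinOn_iff.1 hmin (x, y) ⟨hx, hy⟩) hxy
    have hppos : 0 < dist p q := by
      rcases eq_or_ne p q with rfl | hpq'
      · exact absurd hpq.2 (hdis p hpq.1)
      · exact dist_pos.2 hpq'
    obtain ⟨i, hip, hiq⟩ := hkey p (hsub M₁ h₁ hpq.1) q (hsub M₂ h₂ hpq.2) hpqlt
    have hle : dist (g i p) (g i q) ≤ c * dist p q := (hg i).dist_le_mul p q
    have hc' : (c : ℝ) < 1 := hc
    have hlt : dist (g i p) (g i q) < dist p q :=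
      lt_of_le_of_lt hle (by nlinarith)
    exact absurd (isMinOn_iff.1 hmin (g i p, g i q)
      ⟨h₁inv p hpq.1 i hip, h₂inv q hpq.2 i hiq⟩) (not_le.2 hlt)
  refine ⟨⟨η, hη, hsep⟩, ?_⟩
  -- finiteness
  have hch : ∀ M : {M : Set T | MinimalCompactInvariant g ν M}, ∃ x, x ∈ (M : Set T) :=
    fun M => M.2.1
  choose f hf using hch
  obtain ⟨s, hsfin, hscov⟩ := (EMetric.totallyBounded_iff.1 hX₀c.totallyBounded)
    (ENNReal.ofReal (η/2)) (ENNReal.ofReal_pos.2 (by linarith))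
  have hcen : ∀ M : {M : Set T | MinimalCompactInvariant g ν M},
      ∃ z ∈ s, f M ∈ Metric.ball z (η/2) := by
    intro M
    have hmem : f M ∈ X₀ := hsub M M.2 (hf M)
    obtain ⟨z, hz, hball⟩ : ∃ z ∈ s, f M ∈ Metric.eball z (ENNReal.ofReal (η/2)) := by
      simpa using hscov hmem
    exact ⟨z, hz, Metric.mem_ball.2 (by
      have := Metric.mem_eball.1 hball
      rw [edist_dist] at this
      exact (ENNReal.ofReal_lt_ofReal_iff_of_nonneg dist_nonneg).1 this)⟩
  choose z hzs hzball using hcen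
  haveI : Finite s := hsfin
  have hinj : Function.Injective (fun M : {M : Set T | MinimalCompactInvariant g ν M} =>
      (⟨z M, hzs M⟩ : s)) := by
    intro M₁ M₂ hzeq
    simp only [Subtype.mk.injEq] at hzeq
    by_contra hne'
    have hMne : (M₁ : Set T) ≠ (M₂ : Set T) := fun h => hne' (Subtype.ext h)
    have hd : η ≤ dist (f M₁) (f M₂) := hsep _ _ M₁.2 M₂.2 hMne _ (hf M₁) _ (hf M₂)
    have h1 : dist (f M₁) (z M₁) < η/2 := Metric.mem_ball.1 (hzball M₁)
    have h2 : dist (f M₂) (z M₂) < η/2 := Metric.mem_ball.1 (hzball M₂)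
    rw [hzeq] at h1
    have : dist (f M₁) (f M₂) < η := by
      calc dist (f M₁) (f M₂) ≤ dist (f M₁) (z M₂) + dist (z M₂) (f M₂) := dist_triangle _ _ _
        _ < η/2 + η/2 := add_lt_add h1 (by rwa [dist_comm] at h2)
        _ = η := by ring
    linarith
  have : Finite {M : Set T | MinimalCompactInvariant g ν M} := Finite.of_injective _ hinj
  exact Set.finite_coe_iff.1 this
end

section
/- Under Assumptions: e : T → K continuous with unit vectors spanning K, V_i* e_t = ν_i(t) e_{g_i(t)} with the g_i contractions on a complete metric space T, and Σ_i V_i V_i* = I. If M₁, M₂ are closed invariant subsets of T with dist(M₁, M₂) > 0, then ⟨e_{t₁}, e_{t₂}⟩ = 0 for all t₁ ∈ M₁ and t₂ ∈ M₂. -/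
/-- Under the standing assumptions (`e : T → K` continuous unit vectors with dense span,
`Vᵢ* e_t = νᵢ(t) • e_{gᵢ(t)}` with `gᵢ` contractions on a complete metric space, and
`∑ᵢ Vᵢ Vᵢ* = I`), if `M₁, M₂` are closed invariant subsets with `dist(M₁, M₂) > 0`, then
`⟨e_{t₁}, e_{t₂}⟩ = 0` for all `t₁ ∈ M₁`, `t₂ ∈ M₂`. -/
theorem stmt11 {T K : Type*} [MetricSpace T] [CompleteSpace T]
    [NormedAddCommGroup K] [InnerProductSpace ℂ K] [CompleteSpace K] {N : ℕ}
    (g : Fin N → T → T) (c : NNReal) (hc : c < 1) (hg : ∀ i, LipschitzWith c (g i))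
    (ν : Fin N → T → ℂ)
    (e : T → K) (hecont : Continuous e) (heunit : ∀ t, ‖e t‖ = 1)
    (hspan : (Submodule.span ℂ (Set.range e)).topologicalClosure = ⊤)
    (V : Fin N → K →L[ℂ] K)
    (hco : ∑ i, (V i).comp (ContinuousLinearMap.adjoint (V i)) = 1)
    (hwalk : ∀ i t, ContinuousLinearMap.adjoint (V i) (e t) = ν i t • e (g i t))
    (M₁ M₂ : Set T) (h₁ : IsClosed M₁) (h₂ : IsClosed M₂)
    (hi₁ : InvariantSet g ν M₁) (hi₂ : InvariantSet g ν M₂)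
    (d : ℝ) (hd : 0 < d) (hdist : ∀ x ∈ M₁, ∀ y ∈ M₂, d ≤ dist x y)
    (t₁ : T) (ht₁ : t₁ ∈ M₁) (t₂ : T) (ht₂ : t₂ ∈ M₂) :
    (inner ℂ (e t₁) (e t₂) : ℂ) = 0 := by
  obtain ⟨n, hn⟩ : ∃ n : ℕ, (c : ℝ) ^ n * dist t₁ t₂ < d := by
    rcases eq_or_lt_of_le (dist_nonneg : (0:ℝ) ≤ dist t₁ t₂) with h | h
    · exact ⟨0, by simp [← h, hd]⟩
    · obtain ⟨n, hn⟩ := exists_pow_lt_of_lt_one (div_pos hd h)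
        (show (c : ℝ) < 1 from hc)
      exact ⟨n, (lt_div_iff₀ h).mp hn⟩
  suffices H : ∀ n : ℕ, ∀ t₁ ∈ M₁, ∀ t₂ ∈ M₂,
      (c : ℝ) ^ n * dist t₁ t₂ < d → (inner ℂ (e t₁) (e t₂) : ℂ) = 0 from
    H n t₁ ht₁ t₂ ht₂ hn
  intro n
  induction n with
  | zero =>
    intro t₁ ht₁ t₂ ht₂ h
    simp only [pow_zero, one_mul] at h
    exact absurd (hdist t₁ ht₁ t₂ ht₂) (not_le.2 h)
  | succ n ih =>
    intro t₁ ht₁ t₂ ht₂ h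
    have key : (inner ℂ (e t₁) (e t₂) : ℂ) =
        ∑ i, (starRingEnd ℂ) (ν i t₁) * ν i t₂ * inner ℂ (e (g i t₁)) (e (g i t₂)) := by
      have h1 : e t₂ = ∑ i, V i (ContinuousLinearMap.adjoint (V i) (e t₂)) := by
        have := congrArg (fun L : K →L[ℂ] K => L (e t₂)) hco
        simpa using this.symm
      calc (inner ℂ (e t₁) (e t₂) : ℂ)
          = inner ℂ (e t₁) (∑ i, V i (ContinuousLinearMap.adjoint (V i) (e t₂))) := by
            rw [← h1]
        _ = ∑ i, (inner ℂ (e t₁) (V i (ContinuousLinearMap.adjoint (V i) (e t₂))) : ℂ) :=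
            inner_sum _ _ _
        _ = ∑ i, (inner ℂ (ContinuousLinearMap.adjoint (V i) (e t₁))
              (ContinuousLinearMap.adjoint (V i) (e t₂)) : ℂ) := by
            refine Finset.sum_congr rfl fun i _ => ?_
            rw [ContinuousLinearMap.adjoint_inner_left]
        _ = ∑ i, (starRingEnd ℂ) (ν i t₁) * ν i t₂ * inner ℂ (e (g i t₁)) (e (g i t₂)) := by
            refine Finset.sum_congr rfl fun i _ => ?_
            rw [hwalk, hwalk, inner_smul_left, inner_smul_right]
            ring
    rw [key]
    refine Finset.sum_eq_zero fun i _ => ?_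
    by_cases h1ν : ν i t₁ = 0
    · simp [h1ν]
    by_cases h2ν : ν i t₂ = 0
    · simp [h2ν]
    have hdle : dist (g i t₁) (g i t₂) ≤ (c : ℝ) * dist t₁ t₂ := (hg i).dist_le_mul _ _
    have hlt : (c : ℝ) ^ n * dist (g i t₁) (g i t₂) < d := by
      calc (c : ℝ) ^ n * dist (g i t₁) (g i t₂)
          ≤ (c : ℝ) ^ n * ((c : ℝ) * dist t₁ t₂) := by
            exact mul_le_mul_of_nonneg_left hdle (by positivity)
        _ = (c : ℝ) ^ (n + 1) * dist t₁ t₂ := by ring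
        _ < d := h
    rw [ih (g i t₁) (hi₁ t₁ ht₁ i h1ν) (g i t₂) (hi₂ t₂ ht₂ i h2ν) hlt]
    ring
end

section
/- Let K₁, K₂ be mutually orthogonal closed subspaces of a Hilbert space H, each invariant under S_i* for a Cuntz family (S_i)_{i=0}^{N-1} on H (isometries with orthogonal ranges, Σ_i S_i S_i* = I). Then the subspaces H(K₁) = span{S_ω v : v ∈ K₁, ω a finite word} and H(K₂) = span{S_ω v : v ∈ K₂, ω a finite word} are orthogonal. -/
private lemma aux_right {H : Type*} [NormedAddCommGroup H] [InnerProductSpace ℂ H]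
    [CompleteSpace H] {N : ℕ} (S : Fin N → H →L[ℂ] H)
    (K₁ K₂ : Submodule ℂ H)
    (hperp : ∀ v ∈ K₁, ∀ w ∈ K₂, (inner ℂ v w : ℂ) = 0)
    (hinv₁ : ∀ i, ∀ v ∈ K₁, ContinuousLinearMap.adjoint (S i) v ∈ K₁) :
    ∀ (τ : List (Fin N)), ∀ v ∈ K₁, ∀ w ∈ K₂,
      (inner ℂ v (τ.foldr (fun i u => S i u) w) : ℂ) = 0 := by
  intro τ
  induction τ with
  | nil => exact hperp
  | cons j τ' ih =>
    intro v hv w hw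
    simp only [List.foldr_cons]
    rw [← ContinuousLinearMap.adjoint_inner_left]
    exact ih _ (hinv₁ j v hv) w hw

private lemma aux_gen {H : Type*} [NormedAddCommGroup H] [InnerProductSpace ℂ H]
    [CompleteSpace H] {N : ℕ} (S : Fin N → H →L[ℂ] H)
    (horth : ∀ i j, (ContinuousLinearMap.adjoint (S j)).comp (S i) =
      if i = j then 1 else 0)
    (K₁ K₂ : Submodule ℂ H)
    (hperp : ∀ v ∈ K₁, ∀ w ∈ K₂, (inner ℂ v w : ℂ) = 0)
    (hinv₁ : ∀ i, ∀ v ∈ K₁, ContinuousLinearMap.adjoint (S i) v ∈ K₁)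
    (hinv₂ : ∀ i, ∀ w ∈ K₂, ContinuousLinearMap.adjoint (S i) w ∈ K₂) :
    ∀ (ω τ : List (Fin N)), ∀ v ∈ K₁, ∀ w ∈ K₂,
      (inner ℂ (ω.foldr (fun i u => S i u) v) (τ.foldr (fun i u => S i u) w) : ℂ) = 0 := by
  intro ω
  induction ω with
  | nil => intro τ; exact aux_right S K₁ K₂ hperp hinv₁ τ
  | cons i ω' ih =>
    intro τ v hv w hw
    cases τ with
    | nil =>
      simp only [List.foldr_cons, List.foldr_nil]
      have := aux_right S K₂ K₁ (fun w hw v hv => by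
        rw [← inner_conj_symm]; simp [hperp v hv w hw]) hinv₂ (i :: ω') w hw v hv
      simp only [List.foldr_cons] at this
      rw [← inner_conj_symm, this, map_zero]
    | cons j τ' =>
      simp only [List.foldr_cons]
      rw [← ContinuousLinearMap.adjoint_inner_right]
      have h := horth j i
      have h2 : ContinuousLinearMap.adjoint (S i) ((S j) (τ'.foldr (fun i u => S i u) w))
          = ((ContinuousLinearMap.adjoint (S i)).comp (S j)) (τ'.foldr (fun i u => S i u) w) := rfl
      rw [h2, h]
      by_cases hij : j = i
      · simp only [if_pos hij]
        exact ih τ' v hv w hw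
      · simp [if_neg hij]

/-- Let `K₁, K₂` be mutually orthogonal closed subspaces of `H`, each invariant under the
`Sᵢ*` for a Cuntz family `(Sᵢ)`. Then the spans `H(K₁) = span{S_ω v : v ∈ K₁}` and
`H(K₂) = span{S_ω w : w ∈ K₂}` are orthogonal. -/
theorem stmt12 {H : Type*} [NormedAddCommGroup H] [InnerProductSpace ℂ H] [CompleteSpace H]
    {N : ℕ} (S : Fin N → H →L[ℂ] H)
    (horth : ∀ i j, (ContinuousLinearMap.adjoint (S j)).comp (S i) =
      if i = j then 1 else 0)
    (hsum : ∑ i, (S i).comp (ContinuousLinearMap.adjoint (S i)) = 1)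
    (K₁ K₂ : Submodule ℂ H) (hc₁ : IsClosed (K₁ : Set H)) (hc₂ : IsClosed (K₂ : Set H))
    (hperp : ∀ v ∈ K₁, ∀ w ∈ K₂, (inner ℂ v w : ℂ) = 0)
    (hinv₁ : ∀ i, ∀ v ∈ K₁, ContinuousLinearMap.adjoint (S i) v ∈ K₁)
    (hinv₂ : ∀ i, ∀ w ∈ K₂, ContinuousLinearMap.adjoint (S i) w ∈ K₂) :
    ∀ x ∈ Submodule.span ℂ
        {x : H | ∃ (ω : List (Fin N)) (v : H), v ∈ K₁ ∧ x = ω.foldr (fun i w => S i w) v},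
      ∀ y ∈ Submodule.span ℂ
        {y : H | ∃ (ω : List (Fin N)) (w : H), w ∈ K₂ ∧ y = ω.foldr (fun i u => S i u) w},
      (inner ℂ x y : ℂ) = 0 := by
  intro x hx
  induction hx using Submodule.span_induction with
  | mem x hxm =>
    intro y hy
    induction hy using Submodule.span_induction with
    | mem y hym =>
      obtain ⟨ω, v, hv, rfl⟩ := hxm
      obtain ⟨τ, w, hw, rfl⟩ := hym
      exact aux_gen S horth K₁ K₂ hperp hinv₁ hinv₂ ω τ v hv w hw
    | zero => simp
    | add y z _ _ hy hz => rw [inner_add_right, hy, hz, add_zero]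
    | smul c y _ hy => rw [inner_smul_right, hy, mul_zero]
  | zero => intro y hy; simp
  | add a b _ _ ha hb => intro y hy; rw [inner_add_left, ha y hy, hb y hy, add_zero]
  | smul c a _ ha => intro y hy; rw [inner_smul_left, ha y hy, mul_zero]
end

section
/- With Rf(t) = Σ_i |ν_i(t)|² f(g_i(t)) as above, every continuous fixed point h of R is constant on every minimal compact invariant set M. -/
/-- Real-valued version: a continuous real fixed point of the Ruelle operator is
constant on a minimal compact invariant set. -/
lemma stmt14_real {T : Type*} [MetricSpace T] {N : ℕ}
    (g : Fin N → T → T) (ν : Fin N → T → ℂ)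
    (hsum : ∀ t, ∑ i, ‖ν i t‖ ^ 2 = 1)
    (f : T → ℝ) (hcont : Continuous f)
    (hfix : ∀ t, ∑ i, ‖ν i t‖ ^ 2 * f (g i t) = f t)
    (M : Set T) (hM : MinimalCompactInvariant g ν M) :
    ∀ x ∈ M, ∀ y ∈ M, f x = f y := by
  obtain ⟨hne, hcomp, hinv, hmin⟩ := hM
  obtain ⟨t0, ht0M, ht0max⟩ := hcomp.exists_isMaxOn hne hcont.continuousOn
  set m := f t0 with hm
  set M' : Set T := M ∩ f ⁻¹' {m} with hM'
  have hM'sub : M' ⊆ M := Set.inter_subset_left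
  have hM'ne : M'.Nonempty := ⟨t0, ht0M, rfl⟩
  have hM'comp : IsCompact M' :=
    hcomp.inter_right (isClosed_singleton.preimage hcont)
  have hM'inv : InvariantSet g ν M' := by
    intro t ht i hνi
    have htM : t ∈ M := ht.1
    have htm : f t = m := ht.2
    refine ⟨hinv t htM i hνi, ?_⟩
    have key : ∀ j ∈ Finset.univ, ‖ν j t‖ ^ 2 * (m - f (g j t)) = 0 := by
      rw [← Finset.sum_eq_zero_iff_of_nonneg]
      · have : ∑ j, ‖ν j t‖ ^ 2 * (m - f (g j t))
            = (∑ j, ‖ν j t‖ ^ 2) * m - ∑ j, ‖ν j t‖ ^ 2 * f (g j t) := by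
          rw [Finset.sum_mul, ← Finset.sum_sub_distrib]
          congr 1 with j
          ring
        rw [this, hsum t, hfix t, htm]
        ring
      · intro j _
        by_cases hj : ν j t = 0
        · simp [hj]
        · have hMj : g j t ∈ M := hinv t htM j hj
          have hfle : f (g j t) ≤ m := ht0max hMj
          have : (0:ℝ) ≤ ‖ν j t‖ ^ 2 := sq_nonneg _
          nlinarith
    have := key i (Finset.mem_univ i)
    have hν2 : ‖ν i t‖ ^ 2 ≠ 0 := by
      simpa using hνi
    have : m - f (g i t) = 0 := by
      rcases mul_eq_zero.mp this with h' | h'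
      · exact absurd h' hν2
      · exact h'
    have : f (g i t) = m := by linarith
    simpa using this
  have hMeq : M' = M := hmin M' hM'sub hM'ne hM'comp hM'inv
  intro x hx y hy
  have hx' : x ∈ M' := hMeq ▸ hx
  have hy' : y ∈ M' := hMeq ▸ hy
  have := hx'.2
  have := hy'.2
  simp only [Set.mem_preimage, Set.mem_singleton_iff] at *
  rw [hx'.2, hy'.2]

/-- With the Ruelle operator `Rf(t) = ∑ᵢ |νᵢ(t)|² f(gᵢ(t))`, every continuous fixed point
`h` of `R` is constant on every minimal compact invariant set `M`. -/
theorem stmt14 {T : Type*} [MetricSpace T] [CompleteSpace T] {N : ℕ}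
    (g : Fin N → T → T) (c : NNReal) (hc : c < 1) (hg : ∀ i, LipschitzWith c (g i))
    (ν : Fin N → T → ℂ) (hν : ∀ i, Continuous (ν i))
    (hsum : ∀ t, ∑ i, ‖ν i t‖ ^ 2 = 1)
    (h : T → ℂ) (hcont : Continuous h)
    (hfix : ∀ t, ∑ i, (‖ν i t‖ ^ 2 : ℂ) * h (g i t) = h t)
    (M : Set T) (hM : MinimalCompactInvariant g ν M) :
    ∀ x ∈ M, ∀ y ∈ M, h x = h y := by
  have hre : ∀ t, ∑ i, ‖ν i t‖ ^ 2 * (h (g i t)).re = (h t).re := by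
    intro t
    have := congrArg Complex.re (hfix t)
    simpa [Complex.re_sum, Complex.mul_re, ← Complex.ofReal_pow, Complex.ofReal_re,
      Complex.ofReal_im] using this
  have him : ∀ t, ∑ i, ‖ν i t‖ ^ 2 * (h (g i t)).im = (h t).im := by
    intro t
    have := congrArg Complex.im (hfix t)
    simpa [Complex.im_sum, Complex.mul_im, ← Complex.ofReal_pow, Complex.ofReal_re,
      Complex.ofReal_im] using this
  intro x hx y hy
  have h1 := stmt14_real g ν hsum (fun t => (h t).re)
    (Complex.continuous_re.comp hcont) hre M hM x hx y hy
  have h2 := stmt14_real g ν hsum (fun t => (h t).im)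
    (Complex.continuous_im.comp hcont) him M hM x hx y hy
  exact Complex.ext h1 h2
end

section
/- Suppose the maps g_i are one-to-one, the weights satisfy V_i* e_t = ν_i(t) e_{g_i(t)}, and Σ_i V_i V_i* = I. Let M be a minimal finite invariant set. Then for any t₁ ≠ t₂ in M, ⟨e_{t₁}, e_{t₂}⟩ = 0. -/
/-- Suppose the maps `gᵢ` are one-to-one contractions, `Vᵢ* e_t = νᵢ(t) • e_{gᵢ(t)}`,
and `∑ᵢ Vᵢ Vᵢ* = I`. Let `M` be a minimal finite invariant set. Then for `t₁ ≠ t₂` in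
`M`, `⟨e_{t₁}, e_{t₂}⟩ = 0`. -/
theorem stmt15 {T K : Type*} [MetricSpace T]
    [NormedAddCommGroup K] [InnerProductSpace ℂ K] [CompleteSpace K] {N : ℕ}
    (g : Fin N → T → T) (c : NNReal) (hc : c < 1) (hg : ∀ i, LipschitzWith c (g i))
    (hinj : ∀ i, Function.Injective (g i))
    (ν : Fin N → T → ℂ) (e : T → K) (heunit : ∀ t, ‖e t‖ = 1)
    (V : Fin N → K →L[ℂ] K)
    (hco : ∑ i, (V i).comp (ContinuousLinearMap.adjoint (V i)) = 1)
    (hwalk : ∀ i t, ContinuousLinearMap.adjoint (V i) (e t) = ν i t • e (g i t))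
    (M : Set T) (hMfin : M.Finite) (hMinv : InvariantSet g ν M)
    (hMmin : ∀ M' ⊆ M, M'.Nonempty → InvariantSet g ν M' → M' = M)
    (t₁ : T) (ht₁ : t₁ ∈ M) (t₂ : T) (ht₂ : t₂ ∈ M) (hne : t₁ ≠ t₂) :
    (inner ℂ (e t₁) (e t₂) : ℂ) = 0 := by
  classical
  set F := hMfin.toFinset with hFdef
  have hF : ∀ x, x ∈ F ↔ x ∈ M := fun x => hMfin.mem_toFinset
  set P : Finset (T × T) := (F ×ˢ F).filter (fun p => p.1 ≠ p.2) with hP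
  have hPne : P.Nonempty := ⟨(t₁, t₂), by
    simp only [hP, Finset.mem_filter, Finset.mem_product, hF]
    exact ⟨⟨ht₁, ht₂⟩, hne⟩⟩
  set d : ℝ := P.inf' hPne (fun p => dist p.1 p.2) with hd
  have hdle : ∀ u v : T, u ∈ M → v ∈ M → u ≠ v → d ≤ dist u v := by
    intro u v hu hv huv
    have hmem : (u, v) ∈ P := by
      simp only [hP, Finset.mem_filter, Finset.mem_product, hF]
      exact ⟨⟨hu, hv⟩, huv⟩
    exact Finset.inf'_le _ hmem
  have hdpos : 0 < d := by
    rw [hd, Finset.lt_inf'_iff]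
    intro p hp
    have : p.1 ≠ p.2 := (Finset.mem_filter.1 hp).2
    exact dist_pos.2 this
  -- key expansion
  have key : ∀ s₁ s₂ : T, (inner ℂ (e s₁) (e s₂) : ℂ) =
      ∑ i, (starRingEnd ℂ) (ν i s₁) * ν i s₂ * inner ℂ (e (g i s₁)) (e (g i s₂)) := by
    intro s₁ s₂
    have h1 : (inner ℂ (e s₁) (e s₂) : ℂ)
        = inner ℂ (e s₁) ((∑ i, (V i).comp (ContinuousLinearMap.adjoint (V i))) (e s₂)) := by
      rw [hco]; simp
    rw [h1, ContinuousLinearMap.sum_apply, inner_sum]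
    refine Finset.sum_congr rfl fun i _ => ?_
    rw [ContinuousLinearMap.comp_apply, ← ContinuousLinearMap.adjoint_inner_left,
      hwalk, hwalk, inner_smul_left, inner_smul_right]
    ring
  -- main induction
  have main : ∀ n : ℕ, ∀ s₁ s₂ : T, s₁ ∈ M → s₂ ∈ M → s₁ ≠ s₂ →
      (c : ℝ) ^ n * dist s₁ s₂ < d → (inner ℂ (e s₁) (e s₂) : ℂ) = 0 := by
    intro n
    induction n with
    | zero =>
      intro s₁ s₂ h1 h2 h12 hlt
      simp only [pow_zero, one_mul] at hlt
      exact absurd hlt (not_lt.2 (hdle _ _ h1 h2 h12))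
    | succ n ih =>
      intro s₁ s₂ h1 h2 h12 hlt
      rw [key]
      apply Finset.sum_eq_zero
      intro i _
      by_cases hν1 : ν i s₁ = 0
      · simp [hν1]
      by_cases hν2 : ν i s₂ = 0
      · simp [hν2]
      have hg1 : g i s₁ ∈ M := hMinv s₁ h1 i hν1
      have hg2 : g i s₂ ∈ M := hMinv s₂ h2 i hν2
      have hgne : g i s₁ ≠ g i s₂ := fun h => h12 (hinj i h)
      have hdist : dist (g i s₁) (g i s₂) ≤ (c : ℝ) * dist s₁ s₂ := (hg i).dist_le_mul s₁ s₂
      have hstep : (c : ℝ) ^ n * dist (g i s₁) (g i s₂) < d := by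
        calc (c : ℝ) ^ n * dist (g i s₁) (g i s₂)
            ≤ (c : ℝ) ^ n * ((c : ℝ) * dist s₁ s₂) :=
              mul_le_mul_of_nonneg_left hdist (by positivity)
          _ = (c : ℝ) ^ (n + 1) * dist s₁ s₂ := by ring
          _ < d := hlt
      rw [ih _ _ hg1 hg2 hgne hstep, mul_zero]
  -- choose n large
  have hdistpos : 0 < dist t₁ t₂ := dist_pos.2 hne
  obtain ⟨n, hn⟩ := exists_pow_lt_of_lt_one (div_pos hdpos hdistpos)
    (show (c : ℝ) < 1 from hc)
  refine main n t₁ t₂ ht₁ ht₂ hne ?_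
  rw [← lt_div_iff₀ hdistpos]
  exact hn
end

section
/- Let R = 4, B = {0,2}, so m_B(x) = (1 + e^{4πix})/2, and consider the maps g_i(t) = (t - l_i)/4 with L = {l₀ = 0, l₁ = 3, l₂ = 4, l₃ = 15} and weights ν_i(t) proportional to m_B(g_i(t)) (with α₂ = 0, α_i ≠ 0 for i ≠ 2). Then {0} and {-1, -4} are the only minimal invariant subsets of the real line consisting of points c with 2c ∈ ℤ; in particular {-1,-4} is invariant: the transitions -1 → g₁(-1) = -1, -1 → g₃(-1) = -4, and -4 → g₀(-4) = -1 are all possible. -/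
/-- `m_B(x) = (1 + e^{2πi·2x})/2`, the mask of the digit set `B = {0,2}` with `R = 4`. -/
noncomputable def mB (x : ℝ) : ℂ :=
  (1 + Complex.exp (2 * Real.pi * Complex.I * ((2 * x : ℝ) : ℂ))) / 2

/-- The points `L = {0, 3, 4, 15}`. -/
noncomputable def lvec : Fin 4 → ℝ := ![0, 3, 4, 15]

/-- The maps `gᵢ(t) = (t - lᵢ)/4`. -/
noncomputable def gmap (i : Fin 4) (t : ℝ) : ℝ := (t - lvec i) / 4

/-- The weights `νᵢ(c) = conj(αᵢ) m_B((c - lᵢ)/4)`. -/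
noncomputable def nu (α : Fin 4 → ℂ) (i : Fin 4) (c : ℝ) : ℂ :=
  starRingEnd ℂ (α i) * mB ((c - lvec i) / 4)

/-- A set `M ⊆ ℝ` is invariant: possible transitions (`νᵢ(c) ≠ 0`) from `M` stay in `M`. -/
def InvSet (α : Fin 4 → ℂ) (M : Set ℝ) : Prop :=
  ∀ c ∈ M, ∀ i : Fin 4, nu α i c ≠ 0 → gmap i c ∈ M

/-- A minimal (compact) invariant set. -/
def MinInv (α : Fin 4 → ℂ) (M : Set ℝ) : Prop :=
  M.Nonempty ∧ IsCompact M ∧ InvSet α M ∧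
    ∀ M' ⊆ M, M'.Nonempty → IsCompact M' → InvSet α M' → M' = M

lemma mB_eq_zero_iff (x : ℝ) : mB x = 0 ↔ ∃ k : ℤ, 4 * x = 2 * (k:ℝ) + 1 := by
  have hpi : (Real.pi : ℂ) * Complex.I ≠ 0 :=
    mul_ne_zero (Complex.ofReal_ne_zero.2 Real.pi_ne_zero) Complex.I_ne_zero
  unfold mB
  rw [div_eq_zero_iff]
  simp only [OfNat.ofNat_ne_zero, or_false]
  rw [add_comm, add_eq_zero_iff_eq_neg, ← Complex.exp_pi_mul_I,
    Complex.exp_eq_exp_iff_exists_int]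
  constructor
  · rintro ⟨n, hn⟩
    refine ⟨n, ?_⟩
    have h2 : ((4 * x : ℝ) : ℂ) * (Real.pi * Complex.I)
        = ((2 * (n:ℝ) + 1 : ℝ) : ℂ) * (Real.pi * Complex.I) := by
      push_cast
      push_cast at hn
      linear_combination hn
    exact_mod_cast mul_right_cancel₀ hpi h2
  · rintro ⟨n, hn⟩
    refine ⟨n, ?_⟩
    push_cast
    have : ((4 * x : ℝ) : ℂ) = ((2 * (n:ℝ) + 1 : ℝ) : ℂ) := by exact_mod_cast hn
    push_cast at this
    linear_combination Real.pi * Complex.I * this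

lemma nu_eq_zero (α : Fin 4 → ℂ) (i : Fin 4) (c : ℝ) (k : ℤ)
    (h : c - lvec i = 2 * (k:ℝ) + 1) : nu α i c = 0 := by
  unfold nu
  rw [(mB_eq_zero_iff _).2 ⟨k, by linarith⟩, mul_zero]

lemma nu_ne_zero (α : Fin 4 → ℂ) (i : Fin 4) (c : ℝ) (hα : α i ≠ 0)
    (h : ∀ k : ℤ, c - lvec i ≠ 2 * (k:ℝ) + 1) : nu α i c ≠ 0 := by
  unfold nu
  refine mul_ne_zero (by simpa using hα) ?_
  rw [Ne, mB_eq_zero_iff]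
  rintro ⟨k, hk⟩
  exact h k (by linarith)

lemma lvec0 : lvec 0 = 0 := rfl
lemma lvec1 : lvec 1 = 3 := rfl
lemma lvec3 : lvec 3 = 15 := rfl

/-- no odd real-cast equation when the integer difference is even -/
lemma not_odd_cast (a : ℤ) (ha : Even a) : ∀ k : ℤ, (a : ℝ) ≠ 2 * (k:ℝ) + 1 := by
  intro k hk
  obtain ⟨m, hm⟩ := ha
  have : (a : ℝ) = ((2 * k + 1 : ℤ) : ℝ) := by push_cast; linarith
  have := Int.cast_injective this
  omega

/-- With `R = 4`, `B = {0,2}`, `L = {0,3,4,15}`, weights `νᵢ(c) = conj(αᵢ) m_B((c-lᵢ)/4)`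
where `α₂ = 0` and `αᵢ ≠ 0` for `i ≠ 2`: the transitions `-1 → g₁(-1) = -1`,
`-1 → g₃(-1) = -4` and `-4 → g₀(-4) = -1` are all possible, `{0}` and `{-1,-4}` are
invariant, and they are the only minimal invariant subsets of `ℝ` consisting of points
`c` with `2c ∈ ℤ`. -/
theorem stmt19 (α : Fin 4 → ℂ) (h0 : α 0 ≠ 0) (h1 : α 1 ≠ 0) (h3 : α 3 ≠ 0)
    (h2 : α 2 = 0) :
    (nu α 1 (-1) ≠ 0 ∧ gmap 1 (-1) = -1 ∧
      nu α 3 (-1) ≠ 0 ∧ gmap 3 (-1) = -4 ∧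
      nu α 0 (-4) ≠ 0 ∧ gmap 0 (-4) = -1) ∧
    InvSet α {0} ∧ InvSet α ({-1, -4} : Set ℝ) ∧
    ∀ M : Set ℝ, (∀ c ∈ M, ∃ z : ℤ, 2 * c = (z : ℝ)) → MinInv α M →
      M = {0} ∨ M = ({-1, -4} : Set ℝ) := by
  -- the explicit transitions
  have t1 : nu α 1 (-1) ≠ 0 := by
    refine nu_ne_zero α 1 (-1) h1 ?_
    rw [lvec1]
    intro k h
    exact not_odd_cast (-4) ⟨-2, by ring⟩ k (by push_cast; linarith)
  have t3 : nu α 3 (-1) ≠ 0 := by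
    refine nu_ne_zero α 3 (-1) h3 ?_
    rw [lvec3]
    intro k h
    exact not_odd_cast (-16) ⟨-8, by ring⟩ k (by push_cast; linarith)
  have t0 : nu α 0 (-4) ≠ 0 := by
    refine nu_ne_zero α 0 (-4) h0 ?_
    rw [lvec0]
    intro k h
    exact not_odd_cast (-4) ⟨-2, by ring⟩ k (by push_cast; linarith)
  have g1 : gmap 1 (-1) = -1 := by rw [gmap, lvec1]; norm_num
  have g3 : gmap 3 (-1) = -4 := by rw [gmap, lvec3]; norm_num
  have g0 : gmap 0 (-4) = -1 := by rw [gmap, lvec0]; norm_num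
  -- general transitions from integers
  have trans_even : ∀ c : ℤ, Even c → nu α 0 (c:ℝ) ≠ 0 := by
    intro c hc
    refine nu_ne_zero α 0 _ h0 ?_
    rw [lvec0, sub_zero]
    exact not_odd_cast c hc
  have trans_odd1 : ∀ c : ℤ, Odd c → nu α 1 (c:ℝ) ≠ 0 := by
    intro c hc
    refine nu_ne_zero α 1 _ h1 ?_
    rw [lvec1]
    intro k h
    exact not_odd_cast (c - 3) (by rcases hc with ⟨m, hm⟩; exact ⟨m - 1, by omega⟩) k
      (by push_cast; linarith)
  -- invariance of {0}
  have inv0 : InvSet α ({0} : Set ℝ) := by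
    intro c hc i hnu
    rcases hc with rfl
    fin_cases i
    · show gmap 0 0 ∈ _
      rw [gmap, lvec0]; norm_num
    · exact absurd (nu_eq_zero α 1 0 (-2) (by rw [lvec1]; push_cast; ring)) hnu
    · exact absurd (by simp [nu, h2]) hnu
    · exact absurd (nu_eq_zero α 3 0 (-8) (by rw [lvec3]; push_cast; ring)) hnu
  -- invariance of {-1, -4}
  have inv14 : InvSet α ({-1, -4} : Set ℝ) := by
    intro c hc i hnu
    rcases hc with rfl | hc
    · fin_cases i
      · exact absurd (nu_eq_zero α 0 (-1) (-1) (by rw [lvec0]; push_cast; ring)) hnu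
      · show gmap 1 (-1) ∈ _
        rw [g1]; left; rfl
      · exact absurd (by simp [nu, h2]) hnu
      · show gmap 3 (-1) ∈ _
        rw [g3]; right; rfl
    · rcases hc with rfl
      fin_cases i
      · show gmap 0 (-4) ∈ _
        rw [g0]; left; rfl
      · exact absurd (nu_eq_zero α 1 (-4) (-4) (by rw [lvec1]; push_cast; ring)) hnu
      · exact absurd (by simp [nu, h2]) hnu
      · exact absurd (nu_eq_zero α 3 (-4) (-10) (by rw [lvec3]; push_cast; ring)) hnu
  refine ⟨⟨t1, g1, t3, g3, t0, g0⟩, inv0, inv14, ?_⟩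
  intro M hZ hMin
  obtain ⟨hne, hcomp, hinv, hmin⟩ := hMin
  -- Step A: every point of M is an integer
  have hInt : ∀ c ∈ M, ∃ z : ℤ, c = (z:ℝ) := by
    intro c hc
    obtain ⟨z, hz⟩ := hZ c hc
    rcases Int.even_or_odd z with ⟨m, hm⟩ | ⟨m, hm⟩
    · exact ⟨m, by rw [hm] at hz; push_cast at hz; linarith⟩
    · exfalso
      have hnu : nu α 0 c ≠ 0 := by
        refine nu_ne_zero α 0 c h0 ?_
        rw [lvec0, sub_zero]
        intro k hk
        have : (z : ℝ) = ((4 * k + 2 : ℤ) : ℝ) := by push_cast; linarith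
        have := Int.cast_injective this
        omega
      have := hinv c hc 0 hnu
      obtain ⟨w, hw⟩ := hZ _ this
      rw [gmap, lvec0, sub_zero] at hw
      have : (z : ℝ) = ((4 * w : ℤ) : ℝ) := by push_cast; linarith
      have := Int.cast_injective this
      omega
  -- Step B: descent to 0 or -1
  have descent : ∀ n : ℕ, ∀ c : ℤ, c.natAbs = n → (c:ℝ) ∈ M →
      (0:ℝ) ∈ M ∨ (-1:ℝ) ∈ M := by
    intro n
    induction n using Nat.strong_induction_on with
    | _ n IH =>
      intro c hcn hc
      rcases Int.even_or_odd c with hev | hodd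
      · -- even: c/4 ∈ M
        have hmem := hinv _ hc 0 (trans_even c hev)
        rw [gmap, lvec0, sub_zero] at hmem
        obtain ⟨d, hd⟩ := hInt _ hmem
        have hcd : c = 4 * d := by
          have : (c : ℝ) = ((4 * d : ℤ) : ℝ) := by push_cast; linarith
          exact Int.cast_injective this
        by_cases hc0 : c = 0
        · left; rw [hc0] at hc; exact_mod_cast hc
        · refine IH d.natAbs (by omega) d rfl ?_
          rwa [← hd]
      · -- odd: (c-3)/4 ∈ M
        have hmem := hinv _ hc 1 (trans_odd1 c hodd)
        rw [gmap, lvec1] at hmem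
        obtain ⟨d, hd⟩ := hInt _ hmem
        have hcd : c = 4 * d + 3 := by
          have : (c : ℝ) = ((4 * d + 3 : ℤ) : ℝ) := by push_cast; linarith
          exact Int.cast_injective this
        by_cases hc0 : c = -1
        · right; rw [hc0] at hc; exact_mod_cast hc
        · refine IH d.natAbs (by omega) d rfl ?_
          rwa [← hd]
  -- conclude via minimality
  obtain ⟨c, hc⟩ := hne
  obtain ⟨z, hz⟩ := hInt c hc
  rw [hz] at hc
  rcases descent z.natAbs z rfl hc with hmem | hmem
  · left
    exact (hmin {0} (by simpa using hmem) ⟨0, rfl⟩ isCompact_singleton inv0).symm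
  · right
    have hm4 : (-4:ℝ) ∈ M := by
      have := hinv _ hmem 3 t3
      rwa [g3] at this
    refine (hmin {-1, -4} ?_ ⟨-1, by left; rfl⟩ ?_ inv14).symm
    · intro x hx; rcases hx with rfl | hx
      · exact hmem
      · rcases hx with rfl; exact hm4
    · exact (Set.finite_singleton (-4:ℝ) |>.insert (-1)).isCompact
end
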